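/- arXiv:1908.06587 — 2 statements merged into one kernel-verified Lean document; each statement's English description precedes it below -/
import Mathlib

section
/- For every nonzero real λ, every positive integer k, and every integer n ≥ 0, one has 2^{n+k} S_{2,λ/2}(n+k,k) = C(n+k,k) Σ_{l=0}^{n} b*^{(k)}_{l,λ}(k) S_{2,λ}(n,l), where b*^{(k)}_{l,λ} are the type 2 degenerate Bernoulli polynomials of the second kind of order k evaluated at x = k, and S_{2,λ} are the degenerate Stirling numbers of the second kind. -/
open Real Topology Filter

open FormalMultilinearSeries in
private lemma repr_aux {a : ℕ → ℝ} {f : ℝ → ℝ}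
    (ha : ∀ᶠ t : ℝ in 𝓝[≠] 0, HasSum (fun n => a n * t ^ n) (f t)) :
    HasFPowerSeriesAt (ofScalars ℝ a).sum (ofScalars ℝ a) 0 ∧
      ∀ᶠ t : ℝ in 𝓝[≠] 0, (ofScalars ℝ a).sum t = f t := by
  have hcoeff : ∀ n, (ofScalars ℝ a).coeff n = a n := fun n => by
    rw [FormalMultilinearSeries.coeff]; simp [ofScalars, List.prod_ofFn]
  obtain ⟨t₀, ht₀s, ht₀⟩ := (eventually_mem_nhdsWithin.and ha).exists
  have ht₀0 : t₀ ≠ 0 := ht₀s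
  have hsum : Summable fun n => ‖ofScalars ℝ a n‖ * (‖t₀‖₊ : ℝ) ^ n := by
    refine ht₀.summable.abs.congr fun n => ?_
    simp [ofScalars_norm, abs_mul, abs_pow, Real.norm_eq_abs, hcoeff]
  have hrad : 0 < (ofScalars ℝ a).radius := by
    refine lt_of_lt_of_le ?_ ((ofScalars ℝ a).le_radius_of_summable hsum)
    exact_mod_cast nnnorm_pos.mpr ht₀0
  have hball := (ofScalars ℝ a).hasFPowerSeriesOnBall hrad
  refine ⟨hball.hasFPowerSeriesAt, ?_⟩
  have hmem : ∀ᶠ t : ℝ in 𝓝 (0:ℝ), t ∈ EMetric.ball (0:ℝ) (ofScalars ℝ a).radius :=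
    eventually_of_mem (EMetric.ball_mem_nhds 0 hrad) fun t ht => ht
  filter_upwards [ha, hmem.filter_mono (nhdsWithin_le_nhds (s := {(0:ℝ)}ᶜ))] with t hsum' hball'
  have h1 : HasSum (fun n => (ofScalars ℝ a) n fun _ => t) ((ofScalars ℝ a).sum t) :=
    (ofScalars ℝ a).hasSum hball'
  have h2 : HasSum (fun n => a n * t ^ n) ((ofScalars ℝ a).sum t) := by
    simpa [ofScalars_apply_eq, smul_eq_mul, hcoeff, mul_comm] using h1
  exact h2.unique hsum'

private lemma coeff_unique {a b : ℕ → ℝ} {f : ℝ → ℝ}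
    (ha : ∀ᶠ t : ℝ in 𝓝[≠] 0, HasSum (fun n => a n * t ^ n) (f t))
    (hb : ∀ᶠ t : ℝ in 𝓝[≠] 0, HasSum (fun n => b n * t ^ n) (f t)) :
    a = b := by
  obtain ⟨hPa, hfa⟩ := repr_aux ha
  obtain ⟨hPb, hfb⟩ := repr_aux hb
  have hPQ : ∀ᶠ t : ℝ in 𝓝[≠] 0,
      (FormalMultilinearSeries.ofScalars ℝ a).sum t
        = (FormalMultilinearSeries.ofScalars ℝ b).sum t := by
    filter_upwards [hfa, hfb] with t h1 h2; rw [h1, h2]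
  have h0 : (FormalMultilinearSeries.ofScalars ℝ a).sum 0
      = (FormalMultilinearSeries.ofScalars ℝ b).sum 0 := by
    have tp := (hPa.continuousAt.tendsto).mono_left (nhdsWithin_le_nhds (s := {(0:ℝ)}ᶜ))
    have tq := (hPb.continuousAt.tendsto).mono_left (nhdsWithin_le_nhds (s := {(0:ℝ)}ᶜ))
    exact tendsto_nhds_unique ((tendsto_congr' hPQ).mp tp) tq
  have heq : ∀ᶠ t in 𝓝 (0:ℝ), (FormalMultilinearSeries.ofScalars ℝ a).sum t
      = (FormalMultilinearSeries.ofScalars ℝ b).sum t := by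
    filter_upwards [eventually_nhdsWithin_iff.mp hPQ] with t ht
    by_cases h : t = 0
    · simpa [h] using h0
    · exact ht (by simpa using h)
  have := hPa.eq_formalMultilinearSeries_of_eventually hPb heq
  exact FormalMultilinearSeries.ofScalars_series_injective ℝ ℝ this

private noncomputable def convPow (c : ℕ → ℝ) : ℕ → ℕ → ℝ
  | 0, n => if n = 0 then 1 else 0
  | l + 1, n => ∑ i ∈ Finset.range (n + 1), convPow c l i * c (n - i)

private lemma convPow_eq_zero {c : ℕ → ℝ} (hc : c 0 = 0) :
    ∀ l n, n < l → convPow c l n = 0 := by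
  intro l
  induction l with
  | zero => exact fun n hn => absurd hn (Nat.not_lt_zero n)
  | succ l ih =>
    intro n hn
    show (∑ i ∈ Finset.range (n + 1), convPow c l i * c (n - i)) = 0
    apply Finset.sum_eq_zero
    intro i hi
    have hi' : i ≤ n := Finset.mem_range_succ_iff.mp hi
    rcases lt_or_ge i l with h | h
    · rw [ih i h, zero_mul]
    · have : n - i = 0 := by omega
      rw [this, hc, mul_zero]

private lemma convPow_hasSum {c : ℕ → ℝ} {t g : ℝ} (h : HasSum (fun n => c n * t ^ n) g) :
    ∀ l, HasSum (fun n => convPow c l n * t ^ n) (g ^ l) := by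
  intro l
  induction l with
  | zero =>
    have h0 : ∀ (n : ℕ), n ≠ 0 → convPow c 0 n * t ^ n = 0 := by
      intro n hn; simp [convPow, hn]
    simpa [convPow] using hasSum_single (0 : ℕ) h0
  | succ l ih =>
    have hf : Summable fun n => ‖convPow c l n * t ^ n‖ := ih.summable.abs
    have hg : Summable fun n => ‖c n * t ^ n‖ := h.summable.abs
    have key := hasSum_sum_range_mul_of_summable_norm hf hg
    rw [ih.tsum_eq, h.tsum_eq] at key
    rw [pow_succ]
    have heq : (fun n => ∑ i ∈ Finset.range (n + 1),
        (convPow c l i * t ^ i) * (c (n - i) * t ^ (n - i)))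
        = fun n => convPow c (l + 1) n * t ^ n := by
      funext n
      show _ = (∑ i ∈ Finset.range (n + 1), convPow c l i * c (n - i)) * t ^ n
      rw [Finset.sum_mul]
      apply Finset.sum_congr rfl
      intro i hi
      have hi' : i ≤ n := Finset.mem_range_succ_iff.mp hi
      have ht : t ^ i * t ^ (n - i) = t ^ n := by rw [← pow_add]; congr 1; omega
      calc convPow c l i * t ^ i * (c (n - i) * t ^ (n - i))
          = convPow c l i * c (n - i) * (t ^ i * t ^ (n - i)) := by ring
        _ = convPow c l i * c (n - i) * t ^ n := by rw [ht]
    exact heq ▸ key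

private lemma abs_convPow_le (c : ℕ → ℝ) :
    ∀ l n, |convPow c l n| ≤ convPow (fun m => |c m|) l n := by
  intro l
  induction l with
  | zero =>
    intro n
    show |if n = 0 then (1:ℝ) else 0| ≤ (if n = 0 then (1:ℝ) else 0)
    split <;> simp
  | succ l ih =>
    intro n
    show |∑ i ∈ Finset.range (n + 1), convPow c l i * c (n - i)| ≤
      ∑ i ∈ Finset.range (n + 1), convPow (fun m => |c m|) l i * |c (n - i)|
    refine (Finset.abs_sum_le_sum_abs _ _).trans (Finset.sum_le_sum fun i _ => ?_)
    rw [abs_mul]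
    exact mul_le_mul_of_nonneg_right (ih i) (abs_nonneg _)

private lemma convPow_nonneg {c : ℕ → ℝ} (hc : ∀ m, 0 ≤ c m) :
    ∀ l n, 0 ≤ convPow c l n := by
  intro l
  induction l with
  | zero => intro n; show (0:ℝ) ≤ if n = 0 then 1 else 0; split <;> norm_num
  | succ l ih =>
    intro n
    show (0:ℝ) ≤ ∑ i ∈ Finset.range (n + 1), convPow c l i * c (n - i)
    exact Finset.sum_nonneg fun i _ => mul_nonneg (ih i) (hc _)

set_option maxHeartbeats 2000000 in
/-- For nonzero real `lam`, positive integer `k` and `n ≥ 0`: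
`2^{n+k} S_{2,λ/2}(n+k,k) = C(n+k,k) Σ_{l=0}^n b*^{(k)}_{l,λ}(k) S_{2,λ}(n,l)`,
where `b*^{(k)}` has EGF `(((1+t)-(1+t)⁻¹)/log_λ(1+t))^k (1+t)^x` with
`log_λ(1+t) = ((1+t)^λ-1)/λ`, and the degenerate Stirling numbers of the second kind
`S_{2,μ}(n,k)` have EGF `(e_μ(t)-1)^k/k!` with `e_μ(t) = (1+μt)^{1/μ}` (and vanish for
`n < k`). -/
theorem degenerate_stirling_second_kind_type2_bernoulli_identity
    (lam : ℝ) (hlam : lam ≠ 0)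
    (bstar : ℕ → ℕ → ℝ → ℝ)
    (hbstar : ∀ (k : ℕ) (x : ℝ), ∀ᶠ t : ℝ in 𝓝[≠] 0, HasSum
      (fun n : ℕ => bstar k n x * t ^ n / (n.factorial : ℝ))
      ((((1 + t) - (1 + t)⁻¹) / (((1 + t) ^ lam - 1) / lam)) ^ k * (1 + t) ^ x))
    (S2d : ℝ → ℕ → ℕ → ℝ)
    (hS2dzero : ∀ (μ : ℝ) (n k : ℕ), n < k → S2d μ n k = 0)
    (hS2d : ∀ μ : ℝ, μ ≠ 0 → ∀ k : ℕ, ∀ᶠ t : ℝ in 𝓝 0, HasSum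
      (fun n : ℕ => S2d μ n k * t ^ n / (n.factorial : ℝ))
      (((1 + μ * t) ^ (1 / μ) - 1) ^ k / (k.factorial : ℝ)))
    (k : ℕ) (hk : 0 < k) (n : ℕ) :
    (2 : ℝ) ^ (n + k) * S2d (lam / 2) (n + k) k =
      ((n + k).choose k : ℝ) * ∑ l ∈ Finset.range (n + 1), bstar k l (k : ℝ) * S2d lam n l := by
  classical
  set c : ℕ → ℝ := fun m => S2d lam m 1 / (m.factorial : ℝ) with hc_def
  have hc0 : c 0 = 0 := by simp [hc_def, hS2dzero lam 0 1 one_pos]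
  have hc_base : ∀ᶠ t : ℝ in 𝓝 0, HasSum (fun m => c m * t ^ m)
      ((1 + lam * t) ^ (1 / lam) - 1) := by
    filter_upwards [hS2d lam hlam 1] with t ht
    have heq : (fun m => S2d lam m 1 * t ^ m / (m.factorial : ℝ))
        = fun m => c m * t ^ m := by
      funext m; rw [hc_def]; ring
    rw [heq] at ht
    simpa using ht
  -- pick t₁
  obtain ⟨t₁, ht₁s, ht₁⟩ := (eventually_mem_nhdsWithin.and
    (hc_base.filter_mono (nhdsWithin_le_nhds (s := {(0:ℝ)}ᶜ)))).exists
  have ht₁ne : t₁ ≠ 0 := ht₁s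
  have hCsum : Summable fun m => |c m| * |t₁| ^ m :=
    ht₁.summable.abs.congr fun m => by rw [abs_mul, abs_pow]
  set M := ∑' m, |c m| * |t₁| ^ m with hM_def
  -- pick s₀
  obtain ⟨s₀, hs₀s, hs₀⟩ := (eventually_mem_nhdsWithin.and (hbstar k (k : ℝ))).exists
  have hs₀ne : s₀ ≠ 0 := hs₀s
  have hbsum : Summable fun l => |bstar k l (k : ℝ)| * |s₀| ^ l / (l.factorial : ℝ) := by
    refine hs₀.summable.abs.congr fun l => ?_
    rw [abs_div, abs_mul, abs_pow, Nat.abs_cast]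
  -- positivity of base near 0
  have hpos_ev : ∀ᶠ t : ℝ in 𝓝 (0 : ℝ), 0 < 1 + lam * t := by
    have h1 : Tendsto (fun t : ℝ => 1 + lam * t) (𝓝 0) (𝓝 1) := by
      have hcont : Continuous fun t : ℝ => 1 + lam * t := by fun_prop
      simpa using hcont.tendsto 0
    exact h1.eventually_const_lt one_pos
  have hrpow_lam : ∀ t : ℝ, 0 < 1 + lam * t →
      ((1 + lam * t) ^ (1 / lam)) ^ lam = 1 + lam * t := by
    intro t hpos
    rw [← Real.rpow_mul hpos.le, div_mul_cancel₀ 1 hlam, Real.rpow_one]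
  have hgne_ev : ∀ᶠ t : ℝ in 𝓝[≠] (0 : ℝ), (1 + lam * t) ^ (1 / lam) - 1 ≠ 0 := by
    filter_upwards [eventually_mem_nhdsWithin, hpos_ev.filter_mono (nhdsWithin_le_nhds (s := {(0:ℝ)}ᶜ))]
      with t htne hpos
    intro hg0
    have h1 : (1 + lam * t) ^ (1 / lam) = 1 := by linarith
    have h2 := hrpow_lam t hpos
    rw [h1, Real.one_rpow] at h2
    have h3 : lam * t = 0 := by linarith
    rcases mul_eq_zero.mp h3 with h | h
    · exact hlam h
    · exact htne (by simpa using h)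
  have hg_tendsto : Tendsto (fun t : ℝ => (1 + lam * t) ^ (1 / lam) - 1) (𝓝 0) (𝓝 0) := by
    have hb : ContinuousAt (fun t : ℝ => 1 + lam * t) 0 := by fun_prop
    have hc1 : ContinuousAt (fun t : ℝ => (1 + lam * t) ^ (1 / lam) - 1) 0 :=
      (hb.rpow_const (Or.inl (by norm_num))).sub continuousAt_const
    simpa [Real.one_rpow] using hc1.tendsto
  have hg_tendsto' : Tendsto (fun t : ℝ => (1 + lam * t) ^ (1 / lam) - 1)
      (𝓝[≠] (0 : ℝ)) (𝓝[≠] (0 : ℝ)) := by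
    rw [tendsto_nhdsWithin_iff]
    exact ⟨hg_tendsto.mono_left nhdsWithin_le_nhds, hgne_ev.mono fun t h => by simpa using h⟩
    -- the right-hand side generating function identity
  have hRHS : ∀ᶠ t : ℝ in 𝓝[≠] (0 : ℝ), HasSum
      (fun m => (∑ l ∈ Finset.range (m + 1),
        bstar k l (k : ℝ) * convPow c l m / (l.factorial : ℝ)) * t ^ m)
      ((((1 + ((1 + lam * t) ^ (1 / lam) - 1)) - (1 + ((1 + lam * t) ^ (1 / lam) - 1))⁻¹) /
          (((1 + ((1 + lam * t) ^ (1 / lam) - 1)) ^ lam - 1) / lam)) ^ k *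
        (1 + ((1 + lam * t) ^ (1 / lam) - 1)) ^ ((k : ℕ) : ℝ)) := by
    have e1 : ∀ᶠ t : ℝ in 𝓝[≠] (0 : ℝ), HasSum (fun m => c m * t ^ m)
        ((1 + lam * t) ^ (1 / lam) - 1) :=
      hc_base.filter_mono (nhdsWithin_le_nhds (s := {(0:ℝ)}ᶜ))
    have e2 := hg_tendsto'.eventually (hbstar k (k : ℝ))
    have e3 : ∀ᶠ t : ℝ in 𝓝[≠] (0 : ℝ), |t| ≤ |t₁| := by
      have habs : Tendsto (fun t : ℝ => |t|) (𝓝 0) (𝓝 0) := by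
        simpa using continuous_abs.tendsto (0:ℝ)
      exact ((habs.eventually_lt_const (abs_pos.mpr ht₁ne)).mono
        fun t h => h.le).filter_mono (nhdsWithin_le_nhds (s := {(0:ℝ)}ᶜ))
    have e4 : ∀ᶠ t : ℝ in 𝓝[≠] (0 : ℝ), |t| * (M / |t₁|) ≤ |s₀| := by
      have habs : Tendsto (fun t : ℝ => |t| * (M / |t₁|)) (𝓝 0) (𝓝 0) := by
        have h1 : Tendsto (fun t : ℝ => |t|) (𝓝 0) (𝓝 0) := by
          simpa using continuous_abs.tendsto (0:ℝ)
        simpa using h1.mul_const (M / |t₁|)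
      exact ((habs.eventually_lt_const (abs_pos.mpr hs₀ne)).mono
        fun t h => h.le).filter_mono (nhdsWithin_le_nhds (s := {(0:ℝ)}ᶜ))
    filter_upwards [e1, e2, e3, e4] with t ht1 ht2 ht3 ht4
    have hxsum : Summable fun m => |c m| * |t| ^ m := by
      refine Summable.of_nonneg_of_le
        (fun m => mul_nonneg (abs_nonneg _) (pow_nonneg (abs_nonneg _) _))
        (fun m => ?_) hCsum
      exact mul_le_mul_of_nonneg_left (pow_le_pow_left₀ (abs_nonneg t) ht3 m) (abs_nonneg _)
    have hGx : HasSum (fun m => |c m| * |t| ^ m) (∑' m, |c m| * |t| ^ m) := hxsum.hasSum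
    set Gx := ∑' m, |c m| * |t| ^ m with hGx_def
    have hGx0 : 0 ≤ Gx :=
      tsum_nonneg fun m => mul_nonneg (abs_nonneg _) (pow_nonneg (abs_nonneg _) _)
    have hGx_le : Gx ≤ |s₀| := by
      have ht₁pos : (0:ℝ) < |t₁| := abs_pos.mpr ht₁ne
      have hb1 : ∀ m, |c m| * |t| ^ m ≤ (|t| / |t₁|) * (|c m| * |t₁| ^ m) := by
        intro m
        cases m with
        | zero => simp [hc0]
        | succ j =>
          have key : |t| ^ (j + 1) ≤ (|t| / |t₁|) * |t₁| ^ (j + 1) := by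
            have h2 : |t| * |t| ^ j ≤ |t| * |t₁| ^ j :=
              mul_le_mul_of_nonneg_left (pow_le_pow_left₀ (abs_nonneg t) ht3 j) (abs_nonneg t)
            calc |t| ^ (j + 1) = |t| * |t| ^ j := by ring
              _ ≤ |t| * |t₁| ^ j := h2
              _ = (|t| / |t₁|) * |t₁| ^ (j + 1) := by field_simp; ring
          calc |c (j+1)| * |t| ^ (j + 1)
              ≤ |c (j+1)| * ((|t| / |t₁|) * |t₁| ^ (j + 1)) :=
                mul_le_mul_of_nonneg_left key (abs_nonneg _)
            _ = (|t| / |t₁|) * (|c (j+1)| * |t₁| ^ (j + 1)) := by ring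
      have h2 : Summable fun m => (|t| / |t₁|) * (|c m| * |t₁| ^ m) := hCsum.mul_left _
      have h3 := Summable.tsum_le_tsum hb1 hxsum h2
      rw [tsum_mul_left] at h3
      refine h3.trans ?_
      have h4 : |t| / |t₁| * M = |t| * (M / |t₁|) := by ring
      rw [h4]; exact ht4
    have hCl : ∀ l, HasSum (fun m => convPow (fun m => |c m|) l m * |t| ^ m) (Gx ^ l) :=
      fun l => convPow_hasSum hGx l
    have hcl : ∀ l, HasSum (fun m => convPow c l m * t ^ m)
        (((1 + lam * t) ^ (1 / lam) - 1) ^ l) := fun l => convPow_hasSum ht1 l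
    have hVsum : Summable (fun p : ℕ × ℕ =>
        |bstar k p.1 (k : ℝ)| / (p.1.factorial : ℝ) *
          (convPow (fun m => |c m|) p.1 p.2 * |t| ^ p.2)) := by
      have hVnn : ∀ p : ℕ × ℕ, (0:ℝ) ≤
          |bstar k p.1 (k : ℝ)| / (p.1.factorial : ℝ) *
            (convPow (fun m => |c m|) p.1 p.2 * |t| ^ p.2) := fun p =>
        mul_nonneg (div_nonneg (abs_nonneg _) (Nat.cast_nonneg _))
          (mul_nonneg (convPow_nonneg (fun m => abs_nonneg _) _ _) (pow_nonneg (abs_nonneg _) _))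
      refine (summable_prod_of_nonneg hVnn).mpr ⟨fun l => ?_, ?_⟩
      · exact (hCl l).summable.mul_left (|bstar k l (k : ℝ)| / (l.factorial : ℝ))
      have hrow : ∀ l : ℕ, (∑' m, |bstar k l (k : ℝ)| / (l.factorial : ℝ) *
          (convPow (fun m => |c m|) l m * |t| ^ m))
          = |bstar k l (k : ℝ)| / (l.factorial : ℝ) * Gx ^ l := by
        intro l
        rw [tsum_mul_left, (hCl l).tsum_eq]
      refine Summable.of_nonneg_of_le
        (fun l => tsum_nonneg fun m => hVnn (l, m)) (fun l => ?_) hbsum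
      rw [hrow l]
      calc |bstar k l (k : ℝ)| / (l.factorial : ℝ) * Gx ^ l
          ≤ |bstar k l (k : ℝ)| / (l.factorial : ℝ) * |s₀| ^ l :=
            mul_le_mul_of_nonneg_left (pow_le_pow_left₀ hGx0 hGx_le l)
              (div_nonneg (abs_nonneg _) (Nat.cast_nonneg _))
        _ = |bstar k l (k : ℝ)| * |s₀| ^ l / (l.factorial : ℝ) := by ring
    have hvsum : Summable (fun p : ℕ × ℕ =>
        bstar k p.1 (k : ℝ) / (p.1.factorial : ℝ) * (convPow c p.1 p.2 * t ^ p.2)) := by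
      refine Summable.of_norm_bounded hVsum fun p => ?_
      show |bstar k p.1 (k : ℝ) / (p.1.factorial : ℝ) * (convPow c p.1 p.2 * t ^ p.2)| ≤ _
      rw [abs_mul, abs_mul, abs_div, Nat.abs_cast, abs_pow]
      exact mul_le_mul_of_nonneg_left
        (mul_le_mul_of_nonneg_right (abs_convPow_le c _ _) (pow_nonneg (abs_nonneg _) _))
        (div_nonneg (abs_nonneg _) (Nat.cast_nonneg _))
    have hv_total : HasSum (fun p : ℕ × ℕ =>
        bstar k p.1 (k : ℝ) / (p.1.factorial : ℝ) * (convPow c p.1 p.2 * t ^ p.2))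
        ((((1 + ((1 + lam * t) ^ (1 / lam) - 1)) - (1 + ((1 + lam * t) ^ (1 / lam) - 1))⁻¹) /
            (((1 + ((1 + lam * t) ^ (1 / lam) - 1)) ^ lam - 1) / lam)) ^ k *
          (1 + ((1 + lam * t) ^ (1 / lam) - 1)) ^ ((k : ℕ) : ℝ)) := by
      have htsum := hvsum.hasSum
      have hprod := Summable.tsum_prod' hvsum (fun l => ((hcl l).summable.mul_left
        (bstar k l (k : ℝ) / (l.factorial : ℝ))))
      have hrow : ∀ l : ℕ, (∑' m, bstar k l (k : ℝ) / (l.factorial : ℝ) *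
          (convPow c l m * t ^ m))
          = bstar k l (k : ℝ) / (l.factorial : ℝ) * ((1 + lam * t) ^ (1 / lam) - 1) ^ l := by
        intro l
        rw [tsum_mul_left, (hcl l).tsum_eq]
      have hval : (∑' p : ℕ × ℕ,
          bstar k p.1 (k : ℝ) / (p.1.factorial : ℝ) * (convPow c p.1 p.2 * t ^ p.2))
          = (((1 + ((1 + lam * t) ^ (1 / lam) - 1)) - (1 + ((1 + lam * t) ^ (1 / lam) - 1))⁻¹) /
              (((1 + ((1 + lam * t) ^ (1 / lam) - 1)) ^ lam - 1) / lam)) ^ k *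
            (1 + ((1 + lam * t) ^ (1 / lam) - 1)) ^ ((k : ℕ) : ℝ) := by
        rw [hprod]
        simp_rw [hrow]
        have hfun : (fun l => bstar k l (k : ℝ) / (l.factorial : ℝ) *
            ((1 + lam * t) ^ (1 / lam) - 1) ^ l)
            = fun l => bstar k l (k : ℝ) * ((1 + lam * t) ^ (1 / lam) - 1) ^ l /
              (l.factorial : ℝ) := by
          funext l; ring
        rw [hfun]
        exact ht2.tsum_eq
      rwa [hval] at htsum
    have hswap : HasSum (fun p : ℕ × ℕ =>
        bstar k p.2 (k : ℝ) / (p.2.factorial : ℝ) * (convPow c p.2 p.1 * t ^ p.1))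
        ((((1 + ((1 + lam * t) ^ (1 / lam) - 1)) - (1 + ((1 + lam * t) ^ (1 / lam) - 1))⁻¹) /
            (((1 + ((1 + lam * t) ^ (1 / lam) - 1)) ^ lam - 1) / lam)) ^ k *
          (1 + ((1 + lam * t) ^ (1 / lam) - 1)) ^ ((k : ℕ) : ℝ)) :=
      ((Equiv.prodComm ℕ ℕ).hasSum_iff).mpr hv_total
    refine hswap.prod_fiberwise fun m => ?_
    have hfin : ∀ l ∉ Finset.range (m + 1),
        bstar k l (k : ℝ) / (l.factorial : ℝ) * (convPow c l m * t ^ m) = 0 := by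
      intro l hl
      have hml : m < l := by simpa using Finset.mem_range.not.mp hl
      rw [convPow_eq_zero hc0 l m hml, zero_mul, mul_zero]
    have hfs := hasSum_sum_of_ne_finset_zero (L := SummationFilter.unconditional ℕ) hfin
    have heq : (∑ l ∈ Finset.range (m + 1),
        bstar k l (k : ℝ) / (l.factorial : ℝ) * (convPow c l m * t ^ m))
        = (∑ l ∈ Finset.range (m + 1),
            bstar k l (k : ℝ) * convPow c l m / (l.factorial : ℝ)) * t ^ m := by
      rw [Finset.sum_mul]
      apply Finset.sum_congr rfl
      intro l _
      ring
    rwa [heq] at hfs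
  -- identification of the bstar target with the explicit function of t
  have hmatch : ∀ᶠ t : ℝ in 𝓝[≠] (0 : ℝ),
      ((((1 + ((1 + lam * t) ^ (1 / lam) - 1)) - (1 + ((1 + lam * t) ^ (1 / lam) - 1))⁻¹) /
          (((1 + ((1 + lam * t) ^ (1 / lam) - 1)) ^ lam - 1) / lam)) ^ k *
        (1 + ((1 + lam * t) ^ (1 / lam) - 1)) ^ ((k : ℕ) : ℝ))
      = ((1 + lam * t) ^ (2 / lam) - 1) ^ k / t ^ k := by
    filter_upwards [eventually_mem_nhdsWithin,
      hpos_ev.filter_mono (nhdsWithin_le_nhds (s := {(0:ℝ)}ᶜ))] with t hts hpos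
    have htne : t ≠ 0 := hts
    have hu_pos : 0 < (1 + lam * t) ^ (1 / lam) := Real.rpow_pos_of_pos hpos _
    set u := (1 + lam * t) ^ (1 / lam) with hu_def
    have hune : u ≠ 0 := hu_pos.ne'
    have h1g : 1 + (u - 1) = u := by ring
    have hul : u ^ lam = 1 + lam * t := hrpow_lam t hpos
    have hlogd : ((1 + (u - 1)) ^ lam - 1) / lam = t := by
      rw [h1g, hul]
      field_simp
      ring
    have hpowk : (1 + (u - 1)) ^ ((k : ℕ) : ℝ) = u ^ k := by
      rw [h1g, Real.rpow_natCast]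
    have hu2 : u * u = (1 + lam * t) ^ (2 / lam) := by
      rw [hu_def, ← Real.rpow_add hpos]
      congr 1
      field_simp
      ring
    rw [hlogd, hpowk, h1g]
    have hstep : (u - u⁻¹) / t * u = ((1 + lam * t) ^ (2 / lam) - 1) / t := by
      rw [← hu2]
      field_simp
    calc ((u - u⁻¹) / t) ^ k * u ^ k = ((u - u⁻¹) / t * u) ^ k := by rw [mul_pow]
      _ = (((1 + lam * t) ^ (2 / lam) - 1) / t) ^ k := by rw [hstep]
      _ = ((1 + lam * t) ^ (2 / lam) - 1) ^ k / t ^ k := by rw [div_pow]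
  -- the left-hand side series
  have hhalf : lam / 2 ≠ 0 := div_ne_zero hlam two_ne_zero
  have h2t : Tendsto (fun t : ℝ => 2 * t) (𝓝 (0:ℝ)) (𝓝 (0:ℝ)) := by
    have hcont : Continuous fun t : ℝ => 2 * t := by fun_prop
    simpa using hcont.tendsto 0
  have hS2half := h2t.eventually (hS2d (lam / 2) hhalf k)
  have hLHS : ∀ᶠ t : ℝ in 𝓝[≠] (0 : ℝ), HasSum
      (fun m => ((k.factorial : ℝ) *
        (2 ^ (m + k) * S2d (lam / 2) (m + k) k / ((m + k).factorial : ℝ))) * t ^ m)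
      (((1 + lam * t) ^ (2 / lam) - 1) ^ k / t ^ k) := by
    filter_upwards [hS2half.filter_mono (nhdsWithin_le_nhds (s := {(0:ℝ)}ᶜ)),
      eventually_mem_nhdsWithin] with t ht hts
    have htne : t ≠ 0 := hts
    have hsimp : 1 + lam / 2 * (2 * t) = 1 + lam * t := by ring
    have hexp : 1 / (lam / 2) = 2 / lam := by rw [one_div_div]
    rw [hsimp, hexp] at ht
    have hzero : ∀ i ∈ Finset.range k,
        S2d (lam / 2) i k * (2 * t) ^ i / (i.factorial : ℝ) = 0 := by
      intro i hi
      rw [hS2dzero _ _ _ (Finset.mem_range.mp hi), zero_mul, zero_div]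
    have hshift : HasSum
        (fun m => S2d (lam / 2) (m + k) k * (2 * t) ^ (m + k) / ((m + k).factorial : ℝ))
        (((1 + lam * t) ^ (2 / lam) - 1) ^ k / (k.factorial : ℝ)) := by
      refine (hasSum_nat_add_iff
        (f := fun m => S2d (lam / 2) m k * (2 * t) ^ m / (m.factorial : ℝ)) k).mpr ?_
      simpa [Finset.sum_eq_zero hzero] using ht
    have hdiv := (hshift.div_const (t ^ k)).mul_left (k.factorial : ℝ)
    have hfk : ((k.factorial : ℝ)) ≠ 0 := Nat.cast_ne_zero.mpr (Nat.factorial_ne_zero _)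
    have hfeq : (fun m => (k.factorial : ℝ) *
        (S2d (lam / 2) (m + k) k * (2 * t) ^ (m + k) / ((m + k).factorial : ℝ) / t ^ k))
        = fun m => ((k.factorial : ℝ) *
          (2 ^ (m + k) * S2d (lam / 2) (m + k) k / ((m + k).factorial : ℝ))) * t ^ m := by
      funext m
      have htk : t ^ k ≠ 0 := pow_ne_zero _ htne
      have hfm : (((m + k).factorial : ℝ)) ≠ 0 := Nat.cast_ne_zero.mpr (Nat.factorial_ne_zero _)
      rw [mul_pow, pow_add]
      field_simp
      ring
    have hval : (k.factorial : ℝ) *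
        (((1 + lam * t) ^ (2 / lam) - 1) ^ k / (k.factorial : ℝ) / t ^ k)
        = ((1 + lam * t) ^ (2 / lam) - 1) ^ k / t ^ k := by
      have htk : t ^ k ≠ 0 := pow_ne_zero _ htne
      field_simp
    rw [hfeq, hval] at hdiv
    exact hdiv
  -- combine RHS with target match
  have hbRHS : ∀ᶠ t : ℝ in 𝓝[≠] (0 : ℝ), HasSum
      (fun m => (∑ l ∈ Finset.range (m + 1),
        bstar k l (k : ℝ) * convPow c l m / (l.factorial : ℝ)) * t ^ m)
      (((1 + lam * t) ^ (2 / lam) - 1) ^ k / t ^ k) := by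
    filter_upwards [hRHS, hmatch] with t h1 h2
    rwa [h2] at h1
  have hmain := coeff_unique (f := fun t => ((1 + lam * t) ^ (2 / lam) - 1) ^ k / t ^ k)
    hLHS hbRHS
  -- coefficient identification for the inner Stirling numbers
  have hSconv : ∀ l m : ℕ, S2d lam m l / (m.factorial : ℝ)
      = convPow c l m / (l.factorial : ℝ) := by
    intro l
    have ha : ∀ᶠ t : ℝ in 𝓝[≠] (0 : ℝ), HasSum
        (fun m => (S2d lam m l / (m.factorial : ℝ)) * t ^ m)
        (((1 + lam * t) ^ (1 / lam) - 1) ^ l / (l.factorial : ℝ)) := by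
      filter_upwards [(hS2d lam hlam l).filter_mono (nhdsWithin_le_nhds (s := {(0:ℝ)}ᶜ))] with t ht
      have heq : (fun m => S2d lam m l * t ^ m / (m.factorial : ℝ))
          = fun m => (S2d lam m l / (m.factorial : ℝ)) * t ^ m := by
        funext m; ring
      rwa [heq] at ht
    have hb : ∀ᶠ t : ℝ in 𝓝[≠] (0 : ℝ), HasSum
        (fun m => (convPow c l m / (l.factorial : ℝ)) * t ^ m)
        (((1 + lam * t) ^ (1 / lam) - 1) ^ l / (l.factorial : ℝ)) := by
      filter_upwards [hc_base.filter_mono (nhdsWithin_le_nhds (s := {(0:ℝ)}ᶜ))] with t ht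
      have h1 := (convPow_hasSum ht l).div_const (l.factorial : ℝ)
      have heq : (fun m => convPow c l m * t ^ m / (l.factorial : ℝ))
          = fun m => (convPow c l m / (l.factorial : ℝ)) * t ^ m := by
        funext m; ring
      rwa [heq] at h1
    exact fun m => congrFun (coeff_unique ha hb) m
  -- final algebra
  have hkey := congrFun hmain n
  have hfn : ((n.factorial : ℝ)) ≠ 0 := Nat.cast_ne_zero.mpr (Nat.factorial_ne_zero _)
  have hfk : ((k.factorial : ℝ)) ≠ 0 := Nat.cast_ne_zero.mpr (Nat.factorial_ne_zero _)
  have hfnk : (((n + k).factorial : ℝ)) ≠ 0 := Nat.cast_ne_zero.mpr (Nat.factorial_ne_zero _)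
  have hsum_eq : (∑ l ∈ Finset.range (n + 1),
      bstar k l (k : ℝ) * convPow c l n / (l.factorial : ℝ))
      = (∑ l ∈ Finset.range (n + 1), bstar k l (k : ℝ) * S2d lam n l) / (n.factorial : ℝ) := by
    rw [Finset.sum_div]
    apply Finset.sum_congr rfl
    intro l _
    have hSc := hSconv l n
    calc bstar k l (k : ℝ) * convPow c l n / (l.factorial : ℝ)
        = bstar k l (k : ℝ) * (convPow c l n / (l.factorial : ℝ)) := by ring
      _ = bstar k l (k : ℝ) * (S2d lam n l / (n.factorial : ℝ)) := by rw [← hSc]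
      _ = bstar k l (k : ℝ) * S2d lam n l / (n.factorial : ℝ) := by ring
  have hkey2 : (k.factorial : ℝ) *
      (2 ^ (n + k) * S2d (lam / 2) (n + k) k / ((n + k).factorial : ℝ))
      = (∑ l ∈ Finset.range (n + 1), bstar k l (k : ℝ) * S2d lam n l) / (n.factorial : ℝ) := by
    rw [← hsum_eq]; exact hkey
  have hchoose : (((n + k).choose k : ℕ) : ℝ) * ((k.factorial : ℝ) * (n.factorial : ℝ))
      = ((n + k).factorial : ℝ) := by
    have h := Nat.choose_mul_factorial_mul_factorial (Nat.le_add_left k n)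
    have h2 : (n + k).choose k * k.factorial * n.factorial = (n + k).factorial := by
      simpa [Nat.add_sub_cancel] using h
    push_cast [← h2]
    ring
  field_simp at hkey2
  have hgoal : (2:ℝ) ^ (n + k) * S2d (lam / 2) (n + k) k * ((k.factorial : ℝ) * (n.factorial : ℝ))
      = (∑ l ∈ Finset.range (n + 1), bstar k l (k : ℝ) * S2d lam n l) *
        ((n + k).factorial : ℝ) := by
    linarith [hkey2]
  have hne : ((k.factorial : ℝ) * (n.factorial : ℝ)) ≠ 0 := mul_ne_zero hfk hfn
  calc (2:ℝ) ^ (n + k) * S2d (lam / 2) (n + k) k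
      = (2:ℝ) ^ (n + k) * S2d (lam / 2) (n + k) k *
        ((k.factorial : ℝ) * (n.factorial : ℝ)) / ((k.factorial : ℝ) * (n.factorial : ℝ)) := by
        field_simp
    _ = (∑ l ∈ Finset.range (n + 1), bstar k l (k : ℝ) * S2d lam n l) *
        ((n + k).factorial : ℝ) / ((k.factorial : ℝ) * (n.factorial : ℝ)) := by rw [hgoal]
    _ = ((n + k).choose k : ℝ) * ∑ l ∈ Finset.range (n + 1), bstar k l (k : ℝ) * S2d lam n l := by
        rw [← hchoose]
        field_simp
end

section
/- For every nonzero real λ, every real x, every positive integer k, and every integer n ≥ 0, one has b*^{(k)}_{n,λ}(x) = Σ_{l=0}^{n} β*^{(−k)}_{l,λ}(x) S_{1,λ}(n,l), where b*^{(k)}_{n,λ} are the type 2 degenerate Bernoulli polynomials of the second kind of order k, β*^{(−k)}_{l,λ} are the type 2 degenerate Bernoulli polynomials of order −k, and S_{1,λ} are the degenerate Stirling numbers of the first kind. -/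
open Real Topology Filter



private lemma aux0 (a : ℕ → ℝ) (K ε : ℝ) (hε : 0 < ε)
    (H : ∀ t : ℝ, t ≠ 0 → |t| < ε → ∃ y, HasSum (fun m => a m * t ^ m) y ∧ |y| ≤ K * |t|) :
    a 0 = 0 := by
  obtain ⟨t0, ht0, ht0lt⟩ : ∃ t0 : ℝ, 0 < t0 ∧ t0 < ε := ⟨ε / 2, half_pos hε, by linarith⟩
  obtain ⟨y0, hy0, -⟩ := H t0 (ne_of_gt ht0) (by rw [abs_of_pos ht0]; exact ht0lt)
  have habs : Summable (fun m => |a m * t0 ^ m|) := hy0.summable.abs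
  obtain ⟨A, hAdef⟩ : ∃ A : ℝ, A = ∑' m, |a m * t0 ^ m| := ⟨_, rfl⟩
  have hA : ∀ m, |a m * t0 ^ m| ≤ A := fun m => hAdef ▸ Summable.le_tsum habs m (fun j _ => abs_nonneg _)
  have hA0 : 0 ≤ A := hAdef ▸ tsum_nonneg fun m => abs_nonneg _
  obtain ⟨C, hCdef⟩ : ∃ C : ℝ, C = |K| + 2 * A / t0 + 1 := ⟨_, rfl⟩
  have hC1 : 1 ≤ C := by
    have : (0:ℝ) ≤ |K| + 2 * A / t0 := by positivity
    linarith [hCdef]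
  have key : ∀ t : ℝ, t ≠ 0 → |t| < min (ε/4) (t0/4) → |a 0| ≤ C * |t| := by
    intro t htne htlt
    have ht1 : |t| < ε / 4 := lt_of_lt_of_le htlt (min_le_left _ _)
    have ht2 : |t| < t0 / 4 := lt_of_lt_of_le htlt (min_le_right _ _)
    obtain ⟨y, hy, hb⟩ := H t htne (by linarith)
    obtain ⟨q, hqdef⟩ : ∃ q : ℝ, q = |t| / t0 := ⟨_, rfl⟩
    have hq0 : 0 ≤ q := hqdef ▸ div_nonneg (abs_nonneg _) ht0.le
    have hq : q < 1 / 2 := by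
      rw [hqdef, div_lt_iff₀ ht0]; nlinarith [abs_nonneg t]
    have hy' : HasSum (fun m => a (m + 1) * t ^ (m + 1)) (y - a 0) := by
      refine (hasSum_nat_add_iff (f := fun m => a m * t ^ m) 1).mpr ?_
      simpa using hy
    have hterm : ∀ m : ℕ, |a (m + 1) * t ^ (m + 1)| ≤ A * q ^ (m + 1) := by
      intro m
      have h1 : |a (m + 1) * t ^ (m + 1)| = |a (m + 1) * t0 ^ (m + 1)| * q ^ (m + 1) := by
        rw [abs_mul, abs_mul, abs_pow, abs_pow, abs_of_pos ht0, hqdef, div_pow,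
          mul_assoc, mul_div_cancel₀]
        positivity
      rw [h1]
      exact mul_le_mul_of_nonneg_right (hA _) (by positivity)
    have hgeo : Summable (fun m : ℕ => A * q ^ (m + 1)) := by
      have := (summable_geometric_of_lt_one hq0 (by linarith)).mul_left (A * q)
      refine this.congr fun m => ?_
      ring
    have hsum_abs : Summable (fun m => |a (m + 1) * t ^ (m + 1)|) :=
      Summable.of_nonneg_of_le (fun m => abs_nonneg _) hterm hgeo
    have hbnd : |y - a 0| ≤ A * q * (1 - q)⁻¹ := by
      rw [← hy'.tsum_eq]
      have hsum_abs' : Summable fun m => ‖a (m + 1) * t ^ (m + 1)‖ := by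
        simpa only [Real.norm_eq_abs] using hsum_abs
      calc |∑' m, a (m + 1) * t ^ (m + 1)| ≤ ∑' m, |a (m + 1) * t ^ (m + 1)| := by
            simpa only [Real.norm_eq_abs] using norm_tsum_le_tsum_norm hsum_abs'
        _ ≤ ∑' m, A * q ^ (m + 1) := Summable.tsum_le_tsum hterm hsum_abs hgeo
        _ = A * q * (1 - q)⁻¹ := by
            rw [show (fun m : ℕ => A * q ^ (m + 1)) = fun m : ℕ => (A * q) * q ^ m from
              funext fun m => by ring, tsum_mul_left, tsum_geometric_of_lt_one hq0 (by linarith)]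
    have hinv : (1 - q)⁻¹ ≤ 2 := by
      rw [inv_le_comm₀ (by linarith) (by norm_num)]
      linarith
    have h2 : |y - a 0| ≤ 2 * A * q :=
      calc |y - a 0| ≤ A * q * (1 - q)⁻¹ := hbnd
        _ ≤ A * q * 2 := mul_le_mul_of_nonneg_left hinv (by positivity)
        _ = 2 * A * q := by ring
    have h3 : |a 0| ≤ |y| + |y - a 0| := by
      calc |a 0| = |y - (y - a 0)| := by ring_nf
        _ ≤ |y| + |y - a 0| := abs_sub _ _
    have hK : K * |t| ≤ |K| * |t| := mul_le_mul_of_nonneg_right (le_abs_self K) (abs_nonneg t)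
    have hq2 : 2 * A * q = (2 * A / t0) * |t| := by rw [hqdef]; ring
    calc |a 0| ≤ |y| + |y - a 0| := h3
      _ ≤ K * |t| + 2 * A * q := add_le_add hb h2
      _ ≤ |K| * |t| + (2 * A / t0) * |t| := by rw [hq2] at h2 ⊢; linarith
      _ ≤ C * |t| := by rw [hCdef]; nlinarith [abs_nonneg t]
  by_contra h0
  have ha0 : 0 < |a 0| := abs_pos.mpr h0
  have hCpos : 0 < C := by linarith
  obtain ⟨t, htdef⟩ : ∃ t : ℝ, t = min (min (ε/8) (t0/8)) (|a 0| / (2 * C)) := ⟨_, rfl⟩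
  have hmin : 0 < min (ε/8) (t0/8) := lt_min (by linarith) (by linarith)
  have htpos : 0 < t := htdef ▸ lt_min hmin (by positivity)
  have h1 := key t (ne_of_gt htpos) (by
    rw [abs_of_pos htpos, htdef]
    calc min (min (ε/8) (t0/8)) (|a 0| / (2 * C)) ≤ min (ε/8) (t0/8) := min_le_left _ _
      _ < min (ε/4) (t0/4) := by
          rcases le_total (ε/8) (t0/8) with h | h
          · rw [min_eq_left h]; exact lt_min (by linarith) (by linarith)
          · rw [min_eq_right h]; exact lt_min (by linarith) (by linarith))
  rw [abs_of_pos htpos] at h1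
  have h2 : t ≤ |a 0| / (2 * C) := htdef ▸ min_le_right _ _
  have h4 : C * t ≤ C * (|a 0| / (2 * C)) := mul_le_mul_of_nonneg_left h2 hCpos.le
  have h5 : C * (|a 0| / (2 * C)) = |a 0| / 2 := by field_simp
  linarith

private lemma auxA : ∀ (n : ℕ) (a : ℕ → ℝ) (K ε : ℝ), 0 < ε →
    (∀ t : ℝ, t ≠ 0 → |t| < ε →
      ∃ y, HasSum (fun m => a m * t ^ m) y ∧ |y| ≤ K * |t| ^ (n + 1)) →
    ∀ m ≤ n, a m = 0 := by
  intro n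
  induction n with
  | zero =>
    intro a K ε hε H m hm
    interval_cases m
    refine aux0 a K ε hε fun t ht hlt => ?_
    obtain ⟨y, hy, hb⟩ := H t ht hlt
    exact ⟨y, hy, by simpa using hb⟩
  | succ n IH =>
    intro a K ε hε H m hm
    have hε' : 0 < min ε 1 := lt_min hε one_pos
    have ha0 : a 0 = 0 := by
      refine aux0 a |K| (min ε 1) hε' fun t ht hlt => ?_
      obtain ⟨y, hy, hb⟩ := H t ht (lt_of_lt_of_le hlt (min_le_left _ _))
      refine ⟨y, hy, hb.trans ?_⟩
      have h1 : |t| ≤ 1 := le_of_lt (lt_of_lt_of_le hlt (min_le_right _ _))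
      have h2 : |t| ^ (n + 2) ≤ |t| := by
        calc |t| ^ (n + 2) ≤ |t| ^ 1 := pow_le_pow_of_le_one (abs_nonneg t) h1 (by omega)
          _ = |t| := pow_one _
      calc K * |t| ^ (n + 2) ≤ |K| * |t| ^ (n + 2) :=
            mul_le_mul_of_nonneg_right (le_abs_self K) (by positivity)
        _ ≤ |K| * |t| := mul_le_mul_of_nonneg_left h2 (abs_nonneg K)
    have hshift : ∀ j ≤ n, a (j + 1) = 0 := by
      refine IH (fun j => a (j + 1)) |K| ε hε fun t ht hlt => ?_
      obtain ⟨y, hy, hb⟩ := H t ht hlt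
      have hy1 : HasSum (fun m => a (m + 1) * t ^ (m + 1)) y := by
        have := (hasSum_nat_add_iff (f := fun m => a m * t ^ m) 1).mpr
          (by simpa [ha0] using hy)
        simpa using this
      have hy2 : HasSum (fun m => a (m + 1) * t ^ m) (y / t) := by
        have h3 := hy1.div_const t
        refine h3.congr_fun fun m => ?_
        rw [pow_succ, ← mul_assoc, mul_div_assoc, div_self ht, mul_one]
      refine ⟨y / t, hy2, ?_⟩
      rw [abs_div]
      rw [div_le_iff₀ (abs_pos.mpr ht)]
      calc |y| ≤ K * |t| ^ (n + 2) := hb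
        _ = K * |t| ^ (n + 1) * |t| := by ring
        _ ≤ |K| * |t| ^ (n + 1) * |t| := by
            have := mul_le_mul_of_nonneg_right (le_abs_self K) (pow_nonneg (abs_nonneg t) (n+1))
            nlinarith [abs_nonneg t]
    rcases Nat.eq_zero_or_pos m with h | h
    · subst h; exact ha0
    · obtain ⟨j, rfl⟩ := Nat.exists_eq_add_of_lt h
      simp only [Nat.zero_add] at *
      exact hshift j (by omega)

/-- For nonzero real `lam`, real `x`, positive integer `k` and `n ≥ 0`:
`b*^{(k)}_{n,λ}(x) = Σ_{l=0}^n β*^{(-k)}_{l,λ}(x) S_{1,λ}(n,l)`, where `b*^{(k)}` has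
EGF `(((1+t)-(1+t)⁻¹)/log_λ(1+t))^k (1+t)^x` with `log_λ(1+t) = ((1+t)^λ-1)/λ`, the
type 2 degenerate Bernoulli polynomials of order `-k` have EGF
`((e_λ(t)-e_λ^{-1}(t))/t)^k e_λ^x(t)` with `e_λ^x(t) = (1+λt)^{x/λ}`, and the
degenerate Stirling numbers of the first kind `S_{1,λ}(n,l)` have EGF
`(log_λ(1+t))^l / l!` (and vanish for `n < l`). -/
theorem type2_degenerate_bernoulli_second_kind_in_terms_of_type2
    (lam : ℝ) (hlam : lam ≠ 0)
    (bstar : ℕ → ℕ → ℝ → ℝ)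
    (hbstar : ∀ (k : ℕ) (x : ℝ), ∀ᶠ t : ℝ in 𝓝[≠] 0, HasSum
      (fun n : ℕ => bstar k n x * t ^ n / (n.factorial : ℝ))
      ((((1 + t) - (1 + t)⁻¹) / (((1 + t) ^ lam - 1) / lam)) ^ k * (1 + t) ^ x))
    (k : ℕ) (hk : 0 < k)
    (beta : ℕ → ℝ → ℝ)
    (hbeta : ∀ x : ℝ, ∀ᶠ t : ℝ in 𝓝[≠] 0, HasSum
      (fun n : ℕ => beta n x * t ^ n / (n.factorial : ℝ))
      ((((1 + lam * t) ^ (1 / lam) - (1 + lam * t) ^ (-(1 / lam))) / t) ^ k *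
        (1 + lam * t) ^ (x / lam)))
    (S1d : ℕ → ℕ → ℝ)
    (hS1dzero : ∀ n l : ℕ, n < l → S1d n l = 0)
    (hS1d : ∀ l : ℕ, ∀ᶠ t : ℝ in 𝓝 0, HasSum
      (fun n : ℕ => S1d n l * t ^ n / (n.factorial : ℝ))
      ((((1 + t) ^ lam - 1) / lam) ^ l / (l.factorial : ℝ)))
    (x : ℝ) (n : ℕ) :
    bstar k n x = ∑ l ∈ Finset.range (n + 1), beta l x * S1d n l := by
  set U : ℝ → ℝ := fun t => ((1 + t) ^ lam - 1) / lam with hUdef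
  have hU0 : U 0 = 0 := by simp [hUdef]
  obtain ⟨c, hU⟩ : ∃ c, HasDerivAt U c 0 := by
    have h1 : HasDerivAt (fun t : ℝ => 1 + t) 1 0 := by
      simpa using (hasDerivAt_id (0:ℝ)).const_add 1
    have h2 := h1.rpow_const (p := lam) (Or.inl (by norm_num))
    exact ⟨_, (h2.sub_const 1).div_const lam⟩
  have hslope : ∀ᶠ t in 𝓝[≠] (0:ℝ), |U t| ≤ (|c| + 1) * |t| := by
    have h3 : Tendsto (fun t => |slope U 0 t|) (𝓝[≠] (0:ℝ)) (𝓝 |c|) :=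
      (hasDerivAt_iff_tendsto_slope.mp hU).abs
    filter_upwards [h3.eventually_lt_const (by linarith : |c| < |c| + 1),
      self_mem_nhdsWithin] with t hlt htne
    have hsl : slope U 0 t = U t / t := by rw [slope_def_field]; simp [hU0]
    rw [hsl, abs_div] at hlt
    have htpos : 0 < |t| := abs_pos.mpr htne
    rw [div_lt_iff₀ htpos] at hlt
    linarith
  have hUne : ∀ᶠ t in 𝓝[≠] (0:ℝ), U t ≠ 0 := by
    have h4 : ∀ᶠ t in 𝓝 (0:ℝ), |t| < 1 := by
      simpa using eventually_abs_sub_lt (0:ℝ) one_pos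
    filter_upwards [nhdsWithin_le_nhds h4, self_mem_nhdsWithin] with t hlt htne
    intro h
    have hpos : (0:ℝ) < 1 + t := by
      rcases abs_lt.mp hlt with ⟨h5, _⟩; linarith
    have h6 : (1 + t) ^ lam = 1 := by
      have := (div_eq_zero_iff.mp h).resolve_right hlam
      linarith [sub_eq_zero.mp this]
    have h7 : ((1 + t) ^ lam) ^ (1 / lam) = (1:ℝ) ^ (1 / lam) := by rw [h6]
    rw [← Real.rpow_mul hpos.le, mul_one_div_cancel hlam, Real.rpow_one, Real.one_rpow] at h7
    simp only [Set.mem_compl_iff, Set.mem_singleton_iff] at htne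
    exact htne (by linarith)
  have hUtend : Tendsto U (𝓝[≠] (0:ℝ)) (𝓝[≠] (0:ℝ)) := by
    rw [tendsto_nhdsWithin_iff]
    refine ⟨?_, hUne⟩
    have := hU.continuousAt.continuousWithinAt (s := {(0:ℝ)}ᶜ)
    rw [ContinuousWithinAt, hU0] at this
    exact this
  -- pick u0
  obtain ⟨u0, hsum0, hu0ne⟩ :
      ∃ u0 : ℝ, HasSum (fun l : ℕ => beta l x * u0 ^ l / (l.factorial : ℝ))
        ((((1 + lam * u0) ^ (1 / lam) - (1 + lam * u0) ^ (-(1 / lam))) / u0) ^ k *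
          (1 + lam * u0) ^ (x / lam)) ∧ u0 ≠ 0 := by
    have := (hbeta x).and (self_mem_nhdsWithin : {t : ℝ | t ≠ 0} ∈ 𝓝[≠] (0:ℝ))
    exact this.exists
  have hu0pos : 0 < |u0| := abs_pos.mpr hu0ne
  have habs0 : Summable (fun l => |beta l x * u0 ^ l / (l.factorial : ℝ)|) :=
    hsum0.summable.abs
  obtain ⟨A, hAdef⟩ : ∃ A : ℝ, A = ∑' l, |beta l x * u0 ^ l / (l.factorial : ℝ)| := ⟨_, rfl⟩
  have hA : ∀ l, |beta l x * u0 ^ l / (l.factorial : ℝ)| ≤ A := fun l =>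
    hAdef ▸ Summable.le_tsum habs0 l (fun j _ => abs_nonneg _)
  have hA0 : 0 ≤ A := hAdef ▸ tsum_nonneg fun l => abs_nonneg _
  obtain ⟨c1, hc1def⟩ : ∃ c1 : ℝ, c1 = |c| + 1 := ⟨_, rfl⟩
  have hc1pos : 0 < c1 := by rw [hc1def]; positivity
  obtain ⟨K, hKdef⟩ : ∃ K : ℝ, K = 2 * A * (c1 / |u0|) ^ (n + 1) := ⟨_, rfl⟩
  -- the big eventually
  have hS1dall : ∀ᶠ t in 𝓝[≠] (0:ℝ), ∀ l ∈ Finset.range (n+1),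
      HasSum (fun m : ℕ => S1d m l * t ^ m / (m.factorial : ℝ))
        ((((1 + t) ^ lam - 1) / lam) ^ l / (l.factorial : ℝ)) :=
    nhdsWithin_le_nhds ((eventually_all_finset (Finset.range (n+1))).mpr fun l _ => hS1d l)
  have hsmall : ∀ᶠ t in 𝓝[≠] (0:ℝ), |t| < 1 :=
    nhdsWithin_le_nhds (by simpa using eventually_abs_sub_lt (0:ℝ) one_pos : ∀ᶠ t in 𝓝 (0:ℝ), |t| < 1)
  have hUhalf : ∀ᶠ t in 𝓝[≠] (0:ℝ), |U t| < |u0| / 2 := by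
    have h5 : ∀ᶠ u in 𝓝 (0:ℝ), |u| < |u0| / 2 := by
      simpa using eventually_abs_sub_lt (0:ℝ) (by positivity : (0:ℝ) < |u0| / 2)
    exact (hUtend.mono_right nhdsWithin_le_nhds).eventually h5
  have hbetaU : ∀ᶠ t in 𝓝[≠] (0:ℝ), HasSum
      (fun l : ℕ => beta l x * (U t) ^ l / (l.factorial : ℝ))
      ((((1 + lam * U t) ^ (1 / lam) - (1 + lam * U t) ^ (-(1 / lam))) / U t) ^ k *
        (1 + lam * U t) ^ (x / lam)) := hUtend.eventually (hbeta x)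
  have hbig := ((hbstar k x).and (hbetaU.and (hS1dall.and (hsmall.and (hUhalf.and
    (hslope.and self_mem_nhdsWithin))))))
  rw [eventually_iff, Metric.mem_nhdsWithin_iff] at hbig
  obtain ⟨ε, hε, hsub⟩ := hbig
  -- the coefficient sequence
  obtain ⟨a, hadef⟩ : ∃ a : ℕ → ℝ, a = fun m =>
      bstar k m x / (m.factorial : ℝ) -
        ∑ l ∈ Finset.range (n + 1), beta l x * S1d m l / (m.factorial : ℝ) := ⟨_, rfl⟩
  have key : ∀ t : ℝ, t ≠ 0 → |t| < ε →
      ∃ y, HasSum (fun m => a m * t ^ m) y ∧ |y| ≤ K * |t| ^ (n + 1) := by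
    intro t htne hlt
    have hmem := hsub (by
      refine ⟨?_, htne⟩
      rw [Metric.mem_ball, Real.dist_eq, sub_zero]; exact hlt)
    obtain ⟨hfs, hbu, hS, ht1, hhalf, hUb, -⟩ := hmem
    have hpos : (0:ℝ) < 1 + t := by
      rcases abs_lt.mp ht1 with ⟨h5, _⟩; linarith
    have hUtne : U t ≠ 0 := by
      intro h
      have h6 : (1 + t) ^ lam = 1 := by
        have := (div_eq_zero_iff.mp h).resolve_right hlam
        linarith [sub_eq_zero.mp this]
      have h7 : ((1 + t) ^ lam) ^ (1 / lam) = (1:ℝ) ^ (1 / lam) := by rw [h6]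
      rw [← Real.rpow_mul hpos.le, mul_one_div_cancel hlam, Real.rpow_one,
        Real.one_rpow] at h7
      exact htne (by linarith)
    -- rpow algebra: rewrite the target of hbu
    have hlu : 1 + lam * U t = (1 + t) ^ lam := by
      rw [hUdef]; field_simp; ring
    have e1 : (1 + lam * U t) ^ (1 / lam) = 1 + t := by
      rw [hlu, ← Real.rpow_mul hpos.le, mul_one_div_cancel hlam, Real.rpow_one]
    have e2 : (1 + lam * U t) ^ (-(1 / lam)) = (1 + t)⁻¹ := by
      rw [hlu, ← Real.rpow_mul hpos.le]
      have : lam * -(1 / lam) = -1 := by field_simp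
      rw [this, Real.rpow_neg_one]
    have e3 : (1 + lam * U t) ^ (x / lam) = (1 + t) ^ x := by
      rw [hlu, ← Real.rpow_mul hpos.le]
      have : lam * (x / lam) = x := by field_simp
      rw [this]
    rw [e1, e2, e3] at hbu
    -- now hbu has exactly the same target as hfs, modulo U t in place of the defn
    have hbu' : HasSum (fun l : ℕ => beta l x * (U t) ^ l / (l.factorial : ℝ))
        (((1 + t - (1 + t)⁻¹) / (((1 + t) ^ lam - 1) / lam)) ^ k * (1 + t) ^ x) := by
      exact hbu
    -- sum over l ≤ n of the S1d series times beta
    have hsum2 : HasSum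
        (fun m : ℕ => ∑ l ∈ Finset.range (n + 1),
          beta l x * (S1d m l * t ^ m / (m.factorial : ℝ)))
        (∑ l ∈ Finset.range (n + 1), beta l x * ((U t) ^ l / (l.factorial : ℝ))) := by
      refine hasSum_sum fun l hl => ?_
      exact (hS l hl).mul_left (beta l x)
    obtain ⟨y, hydef⟩ : ∃ y : ℝ,
        y = (((1 + t - (1 + t)⁻¹) / (((1 + t) ^ lam - 1) / lam)) ^ k * (1 + t) ^ x) -
          ∑ l ∈ Finset.range (n + 1), beta l x * ((U t) ^ l / (l.factorial : ℝ)) := ⟨_, rfl⟩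
    have hy : HasSum (fun m => a m * t ^ m) y := by
      rw [hydef]
      have h8 := hfs.sub hsum2
      refine h8.congr_fun fun m => ?_
      rw [hadef]
      simp only
      rw [sub_mul, Finset.sum_mul]
      congr 1
      · ring
      · exact Finset.sum_congr rfl fun l _ => by ring
    refine ⟨y, hy, ?_⟩
    -- tail bound
    have htail : HasSum
        (fun m : ℕ => beta (m + (n + 1)) x * (U t) ^ (m + (n + 1)) /
          ((m + (n + 1)).factorial : ℝ)) y := by
      refine (hasSum_nat_add_iff
        (f := fun l => beta l x * (U t) ^ l / (l.factorial : ℝ)) (n + 1)).mpr ?_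
      have : y + ∑ i ∈ Finset.range (n + 1), beta i x * (U t) ^ i / (i.factorial : ℝ) =
          ((1 + t - (1 + t)⁻¹) / (((1 + t) ^ lam - 1) / lam)) ^ k * (1 + t) ^ x := by
        rw [hydef]
        have : ∀ i, beta i x * ((U t) ^ i / (i.factorial : ℝ)) =
            beta i x * (U t) ^ i / (i.factorial : ℝ) := fun i => by ring
        simp only [this]
        ring
      rw [this]
      exact hbu'
    obtain ⟨q, hqdef⟩ : ∃ q : ℝ, q = |U t| / |u0| := ⟨_, rfl⟩
    have hq0 : 0 ≤ q := hqdef ▸ div_nonneg (abs_nonneg _) (abs_nonneg _)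
    have hqhalf : q < 1 / 2 := by
      rw [hqdef, div_lt_iff₀ hu0pos]; linarith
    have hterm : ∀ m : ℕ, |beta (m + (n + 1)) x * (U t) ^ (m + (n + 1)) /
        ((m + (n + 1)).factorial : ℝ)| ≤ A * q ^ (m + (n + 1)) := by
      intro m
      have heq : |beta (m + (n + 1)) x * (U t) ^ (m + (n + 1)) /
          ((m + (n + 1)).factorial : ℝ)| =
          |beta (m + (n + 1)) x * u0 ^ (m + (n + 1)) / ((m + (n + 1)).factorial : ℝ)| *
            q ^ (m + (n + 1)) := by
        rw [abs_div, abs_div, abs_mul, abs_mul, abs_pow, abs_pow, Nat.abs_cast, hqdef,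
          div_pow]
        field_simp
      rw [heq]
      exact mul_le_mul_of_nonneg_right (hA _) (by positivity)
    have hgeo : Summable (fun m : ℕ => A * q ^ (m + (n + 1))) := by
      have := (summable_geometric_of_lt_one hq0 (by linarith)).mul_left (A * q ^ (n + 1))
      refine this.congr fun m => ?_
      rw [pow_add]; ring
    have hsum_abs : Summable (fun m => |beta (m + (n + 1)) x * (U t) ^ (m + (n + 1)) /
        ((m + (n + 1)).factorial : ℝ)|) :=
      Summable.of_nonneg_of_le (fun m => abs_nonneg _) hterm hgeo
    have hsum_abs' : Summable (fun m => ‖beta (m + (n + 1)) x * (U t) ^ (m + (n + 1)) /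
        ((m + (n + 1)).factorial : ℝ)‖) := by
      simpa only [Real.norm_eq_abs] using hsum_abs
    have hbnd : |y| ≤ A * q ^ (n + 1) * (1 - q)⁻¹ := by
      rw [← htail.tsum_eq]
      calc |∑' m, beta (m + (n + 1)) x * (U t) ^ (m + (n + 1)) /
            ((m + (n + 1)).factorial : ℝ)|
          ≤ ∑' m, |beta (m + (n + 1)) x * (U t) ^ (m + (n + 1)) /
            ((m + (n + 1)).factorial : ℝ)| := by
            simpa only [Real.norm_eq_abs] using norm_tsum_le_tsum_norm hsum_abs'
        _ ≤ ∑' m, A * q ^ (m + (n + 1)) := Summable.tsum_le_tsum hterm hsum_abs hgeo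
        _ = A * q ^ (n + 1) * (1 - q)⁻¹ := by
            rw [show (fun m : ℕ => A * q ^ (m + (n + 1))) =
              fun m : ℕ => (A * q ^ (n + 1)) * q ^ m from
              funext fun m => by rw [pow_add]; ring, tsum_mul_left,
              tsum_geometric_of_lt_one hq0 (by linarith)]
    have hinv : (1 - q)⁻¹ ≤ 2 := by
      rw [inv_le_comm₀ (by linarith) (by norm_num)]; linarith
    have hb2 : |y| ≤ 2 * A * q ^ (n + 1) :=
      calc |y| ≤ A * q ^ (n + 1) * (1 - q)⁻¹ := hbnd
        _ ≤ A * q ^ (n + 1) * 2 := mul_le_mul_of_nonneg_left hinv (by positivity)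
        _ = 2 * A * q ^ (n + 1) := by ring
    have hqle : q ≤ (c1 / |u0|) * |t| := by
      rw [hqdef, div_le_iff₀ hu0pos]
      have : (c1 / |u0|) * |t| * |u0| = c1 * |t| := by field_simp
      rw [this, ← hc1def] at *
      rw [hc1def]
      exact hUb
    have hqpow : q ^ (n + 1) ≤ ((c1 / |u0|) * |t|) ^ (n + 1) :=
      pow_le_pow_left₀ hq0 hqle (n + 1)
    calc |y| ≤ 2 * A * q ^ (n + 1) := hb2
      _ ≤ 2 * A * ((c1 / |u0|) * |t|) ^ (n + 1) := by
          exact mul_le_mul_of_nonneg_left hqpow (by positivity)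
      _ = K * |t| ^ (n + 1) := by rw [hKdef, mul_pow]; ring
  -- apply auxA
  have han : a n = 0 := auxA n a K ε hε key n le_rfl
  rw [hadef] at han
  simp only at han
  have hfac : ((n.factorial : ℝ)) ≠ 0 := Nat.cast_ne_zero.mpr n.factorial_ne_zero
  have h9 : bstar k n x / (n.factorial : ℝ) =
      ∑ l ∈ Finset.range (n + 1), beta l x * S1d n l / (n.factorial : ℝ) :=
    sub_eq_zero.mp han
  rw [← Finset.sum_div] at h9
  field_simp at h9
  exact h9
end
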